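/- arXiv:2510.25448 — 2 statements merged into one kernel-verified Lean document; each statement's English description precedes it below -/
import Mathlib

section
/- (One-step oscillation decay, Lemma 2.3 inner step) There is a universal constant c₀ such that for every f ∈ H¹(B_r;ℝ³), every θ ∈ (0,1/2], ∫_{B_{θr}}|f − [f]_{B_{θr}}|² dx ≤ c₀ θ⁵ ∫_{B_r}|f − [f]_{B_r}|² dx + c₀ [θ⁵ + (1+θ)²] r² ∫_{B_r}|∇f|² dx. -/
open MeasureTheory Metric Set
open scoped ENNReal

noncomputable section

abbrev E3 := EuclideanSpace ℝ (Fin 3)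

/-- Jensen for squares on a probability measure. -/
lemma sq_integral_le {α : Type*} [MeasurableSpace α] {μ : Measure α} (hμ : μ univ = 1)
    {u : α → ℝ} (hu : Integrable u μ) (hu2 : Integrable (fun x => u x ^ 2) μ) :
    (∫ x, u x ∂μ) ^ 2 ≤ ∫ x, u x ^ 2 ∂μ := by
  haveI : IsProbabilityMeasure μ := ⟨hμ⟩
  set c := ∫ x, u x ∂μ with hc
  have h0 : 0 ≤ ∫ x, (u x - c) ^ 2 ∂μ := integral_nonneg fun x => sq_nonneg _
  have e1 : ∀ x, (u x - c) ^ 2 = u x ^ 2 - (2 * c) * u x + c ^ 2 := fun x => by ring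
  have hi1 : Integrable (fun x => u x ^ 2 - (2 * c) * u x) μ := hu2.sub (hu.const_mul _)
  have e2 : ∫ x, (u x - c) ^ 2 ∂μ = (∫ x, u x ^ 2 ∂μ) - (2 * c) * c + c ^ 2 := by
    simp_rw [e1]
    rw [integral_add hi1 (integrable_const _), integral_sub hu2 (hu.const_mul _),
      integral_const_mul, integral_const]
    simp [hμ, ← hc]
  nlinarith [h0, e2]

/-- Core FTC bound along a segment inside the ball. -/
lemma segment_bound {s : ℝ} (hs : 0 < s) {f : E3 → E3}
    (hdiff : ∀ z ∈ ball (0:E3) s, DifferentiableAt ℝ f z)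
    {x y : E3} (hx : x ∈ ball (0:E3) s) (hy : y ∈ ball (0:E3) s) :
    ENNReal.ofReal (‖f x - f y‖ ^ 2) ≤ ENNReal.ofReal (4 * s ^ 2) *
      ∫⁻ t in Ioc (0:ℝ) 1, ENNReal.ofReal (‖fderiv ℝ f (x + t • (y - x))‖ ^ 2) := by
  set γ : ℝ → E3 := fun t => x + t • (y - x) with hγ
  set T := ∫⁻ t in Ioc (0:ℝ) 1, ENNReal.ofReal (‖fderiv ℝ f (γ t)‖ ^ 2) with hT
  rcases eq_or_ne T ⊤ with hTtop | hTne
  · rw [hTtop, ENNReal.mul_top (by positivity)]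
    exact le_top
  -- measurability
  have hγc : Continuous γ := continuous_const.add (continuous_id.smul continuous_const)
  have hγm : Measurable γ := hγc.measurable
  set u : ℝ → ℝ := fun t => ‖fderiv ℝ f (γ t)‖ with hu
  have hum : Measurable u := ((measurable_fderiv ℝ f).comp hγm).norm
  have hu2m : Measurable fun t => u t ^ 2 := hum.pow_const 2
  -- integrability of u^2 on Ioc 0 1
  have hgg_int : IntegrableOn (fun t => u t ^ 2) (Ioc (0:ℝ) 1) := by
    refine ⟨hu2m.aestronglyMeasurable.restrict, ?_⟩
    rw [hasFiniteIntegral_iff_norm]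
    have : ∀ t, ENNReal.ofReal ‖u t ^ 2‖ = ENNReal.ofReal (‖fderiv ℝ f (γ t)‖ ^ 2) := by
      intro t; rw [Real.norm_of_nonneg (sq_nonneg _)]
    simp_rw [this]
    exact lt_of_le_of_ne le_top hTne
  have hu_int : IntegrableOn u (Ioc (0:ℝ) 1) := by
    refine Integrable.mono' ((integrable_const (1:ℝ)).add hgg_int) hum.aestronglyMeasurable.restrict ?_
    filter_upwards with t
    have h1 : ‖u t‖ = u t := Real.norm_of_nonneg (norm_nonneg _)
    rw [h1]
    simp only [Pi.add_apply]
    nlinarith [sq_nonneg (u t - 1)]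
  -- membership of segment
  have hmem : ∀ t ∈ Icc (0:ℝ) 1, γ t ∈ ball (0:E3) s := by
    intro t ht
    have := (convex_ball (0:E3) s) hx hy (by linarith [ht.1, ht.2] : (0:ℝ) ≤ 1 - t) ht.1 (by ring)
    have he : (1 - t) • x + t • y = γ t := by simp only [hγ]; module
    rwa [he] at this
  -- derivative
  set d : ℝ → E3 := fun t => (fderiv ℝ f (γ t)) (y - x) with hd
  have hderiv : ∀ t ∈ uIcc (0:ℝ) 1, HasDerivAt (f ∘ γ) (d t) t := by
    intro t ht
    rw [uIcc_of_le (by norm_num)] at ht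
    have hγ' : HasDerivAt γ (y - x) t := by
      have : HasDerivAt (fun τ : ℝ => τ • (y - x)) ((1:ℝ) • (y - x)) t :=
        (hasDerivAt_id t).smul_const (y - x)
      exact (by simpa [one_smul] using this : HasDerivAt (fun τ : ℝ => τ • (y - x)) (y - x) t).const_add x
    exact ((hdiff (γ t) (hmem t ht)).hasFDerivAt).comp_hasDerivAt t hγ'
  have hdm : Measurable d := by
    have : Measurable fun A : E3 →L[ℝ] E3 => A (y - x) :=
      (ContinuousLinearMap.apply ℝ E3 (y - x)).continuous.measurable
    exact this.comp ((measurable_fderiv ℝ f).comp hγm)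
  have hd_int : IntervalIntegrable d volume 0 1 := by
    rw [intervalIntegrable_iff, uIoc_of_le (by norm_num : (0:ℝ) ≤ 1)]
    refine Integrable.mono' (((integrable_const (1:ℝ)).add hgg_int).const_mul ‖y - x‖)
      hdm.aestronglyMeasurable.restrict ?_
    filter_upwards with t
    have h1 : ‖d t‖ ≤ ‖fderiv ℝ f (γ t)‖ * ‖y - x‖ := ContinuousLinearMap.le_opNorm _ _
    have h2 : ‖fderiv ℝ f (γ t)‖ ≤ 1 + u t ^ 2 := by nlinarith [sq_nonneg (u t - 1), norm_nonneg (fderiv ℝ f (γ t))]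
    simp only [Pi.add_apply]
    nlinarith [norm_nonneg (y - x), norm_nonneg (fderiv ℝ f (γ t))]
  -- FTC
  have hftc : ∫ t in (0:ℝ)..1, d t = f y - f x := by
    have := intervalIntegral.integral_eq_sub_of_hasDerivAt hderiv hd_int
    have h0 : γ 0 = x := by simp [hγ]
    have h1 : γ 1 = y := by simp only [hγ]; module
    simpa [Function.comp, h0, h1] using this
  have hnorm : ‖f y - f x‖ ≤ ∫ t in Ioc (0:ℝ) 1, ‖d t‖ := by
    rw [← hftc, intervalIntegral.integral_of_le (by norm_num : (0:ℝ) ≤ 1)]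
    exact norm_integral_le_integral_norm _
  have hd_int' : IntegrableOn d (Ioc (0:ℝ) 1) := by
    rw [intervalIntegrable_iff, uIoc_of_le (by norm_num : (0:ℝ) ≤ 1)] at hd_int
    exact hd_int
  have hnorm2 : ∫ t in Ioc (0:ℝ) 1, ‖d t‖ ≤ ‖y - x‖ * ∫ t in Ioc (0:ℝ) 1, u t := by
    rw [← integral_const_mul]
    refine integral_mono hd_int'.norm (hu_int.const_mul _) fun t => ?_
    calc ‖d t‖ ≤ ‖fderiv ℝ f (γ t)‖ * ‖y - x‖ := ContinuousLinearMap.le_opNorm _ _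
      _ = ‖y - x‖ * u t := by rw [mul_comm]
  -- Jensen on Ioc 0 1
  have hprob : (volume.restrict (Ioc (0:ℝ) 1)) univ = 1 := by
    rw [Measure.restrict_apply_univ, Real.volume_Ioc]; norm_num
  have hjensen : (∫ t in Ioc (0:ℝ) 1, u t) ^ 2 ≤ ∫ t in Ioc (0:ℝ) 1, u t ^ 2 :=
    sq_integral_le hprob hu_int hgg_int
  -- combine
  have hxy : ‖y - x‖ ≤ 2 * s := by
    have hx' : ‖x‖ < s := mem_ball_zero_iff.1 hx
    have hy' : ‖y‖ < s := mem_ball_zero_iff.1 hy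
    calc ‖y - x‖ ≤ ‖y‖ + ‖x‖ := norm_sub_le _ _
      _ ≤ 2 * s := by linarith
  have hu_nonneg : 0 ≤ ∫ t in Ioc (0:ℝ) 1, u t := integral_nonneg fun t => norm_nonneg _
  have hgg_nonneg : 0 ≤ ∫ t in Ioc (0:ℝ) 1, u t ^ 2 := integral_nonneg fun t => sq_nonneg _
  have key : ‖f x - f y‖ ^ 2 ≤ 4 * s ^ 2 * ∫ t in Ioc (0:ℝ) 1, u t ^ 2 := by
    have h1 : ‖f x - f y‖ = ‖f y - f x‖ := norm_sub_rev _ _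
    have h2 : ‖f y - f x‖ ≤ ‖y - x‖ * ∫ t in Ioc (0:ℝ) 1, u t := le_trans hnorm hnorm2
    have h3 : ‖f x - f y‖ ^ 2 ≤ (‖y - x‖ * ∫ t in Ioc (0:ℝ) 1, u t) ^ 2 := by
      rw [h1]; exact pow_le_pow_left₀ (norm_nonneg _) h2 2
    calc ‖f x - f y‖ ^ 2 ≤ (‖y - x‖ * ∫ t in Ioc (0:ℝ) 1, u t) ^ 2 := h3
      _ = ‖y - x‖ ^ 2 * (∫ t in Ioc (0:ℝ) 1, u t) ^ 2 := by ring
      _ ≤ (2 * s) ^ 2 * ∫ t in Ioc (0:ℝ) 1, u t ^ 2 := by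
          apply mul_le_mul (pow_le_pow_left₀ (norm_nonneg _) hxy 2) hjensen
            (sq_nonneg _) (by positivity)
      _ = 4 * s ^ 2 * ∫ t in Ioc (0:ℝ) 1, u t ^ 2 := by ring
  calc ENNReal.ofReal (‖f x - f y‖ ^ 2)
      ≤ ENNReal.ofReal (4 * s ^ 2 * ∫ t in Ioc (0:ℝ) 1, u t ^ 2) := ENNReal.ofReal_le_ofReal key
    _ = ENNReal.ofReal (4 * s ^ 2) * ENNReal.ofReal (∫ t in Ioc (0:ℝ) 1, u t ^ 2) :=
        ENNReal.ofReal_mul (by positivity)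
    _ = ENNReal.ofReal (4 * s ^ 2) * T := by
        rw [ofReal_integral_eq_lintegral_ofReal hgg_int (Filter.Eventually.of_forall fun t => sq_nonneg _)]
set_option maxHeartbeats 1000000 in
lemma poincare {s : ℝ} (hs : 0 < s) {f : E3 → E3}
    (hdiff : ∀ z ∈ ball (0:E3) s, DifferentiableAt ℝ f z)
    (hfi : IntegrableOn f (ball (0:E3) s))
    (hf2 : IntegrableOn (fun z => ‖f z‖ ^ 2) (ball (0:E3) s))
    (hg : IntegrableOn (fun z => ‖fderiv ℝ f z‖ ^ 2) (ball (0:E3) s)) :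
    ∫ z in ball (0:E3) s, ‖f z - ⨍ w in ball (0:E3) s, f w‖ ^ 2 ≤
      32 * s ^ 2 * ∫ z in ball (0:E3) s, ‖fderiv ℝ f z‖ ^ 2 := by
  set B : Set E3 := ball (0:E3) s with hBdef
  have hBm : MeasurableSet B := measurableSet_ball
  set μB : ℝ≥0∞ := volume B with hμB
  have hB0 : μB ≠ 0 := (measure_ball_pos volume (0:E3) hs).ne'
  have hBt : μB ≠ ⊤ := measure_ball_lt_top.ne
  haveI hfin : IsFiniteMeasure (volume.restrict B) :=
    ⟨by rw [Measure.restrict_apply_univ]; exact lt_of_le_of_ne le_top hBt⟩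
  set gE : E3 → ℝ≥0∞ := fun z => ENNReal.ofReal (‖fderiv ℝ f z‖ ^ 2) with hgE
  have hgEm : Measurable gE := ((measurable_fderiv ℝ f).norm.pow_const 2).ennreal_ofReal
  set G : E3 → ℝ≥0∞ := B.indicator gE with hG
  have measG : Measurable G := hgEm.indicator hBm
  set K : ℝ≥0∞ := ∫⁻ z in B, gE z with hK
  have hGint : ∫⁻ z, G z = K := lintegral_indicator hBm gE
  set J : E3 → E3 → ℝ≥0∞ := fun x y => ∫⁻ t in Ioc (1/2:ℝ) 1, G (x + t • (y - x)) with hJ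
  -- joint measurability
  have measΦ : Measurable fun p : (E3 × E3) × ℝ => G (p.1.1 + p.2 • (p.1.2 - p.1.1)) := by
    apply measG.comp
    exact ((continuous_fst.comp continuous_fst).add
      (continuous_snd.smul ((continuous_snd.comp continuous_fst).sub
        (continuous_fst.comp continuous_fst)))).measurable
  have measΦ' : Measurable fun p : (E3 × E3) × ℝ => G (p.1.2 + p.2 • (p.1.1 - p.1.2)) := by
    apply measG.comp
    exact ((continuous_snd.comp continuous_fst).add
      (continuous_snd.smul ((continuous_fst.comp continuous_fst).sub
        (continuous_snd.comp continuous_fst)))).measurable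
  have measJ2 : Measurable (Function.uncurry J) :=
    Measurable.lintegral_prod_right' (f := fun p : (E3 × E3) × ℝ => G (p.1.1 + p.2 • (p.1.2 - p.1.1))) measΦ
  have measJ2' : Measurable (Function.uncurry fun x y => J y x) :=
    Measurable.lintegral_prod_right' (f := fun p : (E3 × E3) × ℝ => G (p.1.2 + p.2 • (p.1.1 - p.1.2))) measΦ'
  -- claim 2 : pointwise bound by J x y + J y x
  have claim2 : ∀ x ∈ B, ∀ y ∈ B, ENNReal.ofReal (‖f x - f y‖ ^ 2) ≤
      ENNReal.ofReal (4 * s ^ 2) * (J x y + J y x) := by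
    intro x hx y hy
    have hmem : ∀ t ∈ Icc (0:ℝ) 1, x + t • (y - x) ∈ B := by
      intro t ht
      have h := (convex_ball (0:E3) s) hx hy (by linarith [ht.2] : (0:ℝ) ≤ 1 - t) ht.1 (by ring)
      have he : (1 - t) • x + t • y = x + t • (y - x) := by module
      rwa [he] at h
    have h0 := segment_bound hs hdiff hx hy
    have congr1 : (∫⁻ t in Ioc (0:ℝ) 1, ENNReal.ofReal (‖fderiv ℝ f (x + t • (y - x))‖ ^ 2))
        = ∫⁻ t in Ioc (0:ℝ) 1, G (x + t • (y - x)) := by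
      refine setLIntegral_congr_fun measurableSet_Ioc (fun t ht => ?_)
      rw [hG, indicator_of_mem (hmem t ⟨ht.1.le, ht.2⟩)]
    have split : (∫⁻ t in Ioc (0:ℝ) 1, G (x + t • (y - x)))
        = (∫⁻ t in Ioc (0:ℝ) (1/2), G (x + t • (y - x))) + J x y := by
      rw [← Ioc_union_Ioc_eq_Ioc (by norm_num : (0:ℝ) ≤ 1/2) (by norm_num : (1/2:ℝ) ≤ 1),
        lintegral_union measurableSet_Ioc (Ioc_disjoint_Ioc_of_le le_rfl)]
    have reflect : (∫⁻ t in Ioc (0:ℝ) (1/2), G (x + t • (y - x))) = J y x := by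
      have hmp : MeasurePreserving (fun t : ℝ => 1 - t) volume volume :=
        Measure.measurePreserving_sub_left volume 1
      have hemb : MeasurableEmbedding (fun t : ℝ => 1 - t) :=
        (Homeomorph.subLeft (1:ℝ)).measurableEmbedding
      have hpre : (fun t : ℝ => 1 - t) ⁻¹' (Ioc 0 (1/2)) = Ico (1/2) 1 := by
        ext a; simp only [mem_preimage, mem_Ioc, mem_Ico]
        constructor <;> intro h <;> constructor <;> linarith [h.1, h.2]
      have := hmp.setLIntegral_comp_preimage_emb hemb
        (fun t => G (x + t • (y - x))) (Ioc 0 (1/2))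
      rw [hpre] at this
      rw [← this, hJ]
      rw [show (volume : Measure ℝ).restrict (Ico (1/2:ℝ) 1)
          = volume.restrict (Ioc (1/2:ℝ) 1) from Measure.restrict_congr_set Ico_ae_eq_Ioc]
      refine lintegral_congr fun t => ?_
      rw [show x + (1 - t) • (y - x) = y + t • (x - y) by module]
    calc ENNReal.ofReal (‖f x - f y‖ ^ 2)
        ≤ ENNReal.ofReal (4 * s ^ 2) * ∫⁻ t in Ioc (0:ℝ) 1, ENNReal.ofReal (‖fderiv ℝ f (x + t • (y - x))‖ ^ 2) := h0
      _ = ENNReal.ofReal (4 * s ^ 2) * (J y x + J x y) := by rw [congr1, split, reflect]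
      _ = ENNReal.ofReal (4 * s ^ 2) * (J x y + J y x) := by rw [add_comm]
  -- inner change-of-variables bound
  have inner_bound : ∀ x : E3, (∫⁻ y in B, J x y) ≤ 4 * K := by
    intro x
    have hswap : (∫⁻ y in B, J x y) = ∫⁻ t in Ioc (1/2:ℝ) 1, ∫⁻ y in B, G (x + t • (y - x)) := by
      refine lintegral_lintegral_swap ?_
      apply Measurable.aemeasurable
      apply measG.comp
      exact (continuous_const.add (continuous_snd.smul (continuous_fst.sub continuous_const))).measurable
    rw [hswap]
    have hinner : ∀ t ∈ Ioc (1/2:ℝ) 1, (∫⁻ y in B, G (x + t • (y - x))) ≤ 8 * K := by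
      intro t ht
      have ht0 : t ≠ 0 := by intro h; rw [h] at ht; exact absurd ht.1 (by norm_num)
      have step : (∫⁻ y, G (x + t • (y - x))) = ENNReal.ofReal |((t:ℝ) ^ 3)⁻¹| * K := by
        have e1 : (∫⁻ y, G (x + t • (y - x)))
            = ∫⁻ y, (fun z => G (z + (x - t • x))) (t • y) := by
          refine lintegral_congr fun y => ?_
          rw [show x + t • (y - x) = t • y + (x - t • x) by module]
        have hFm : Measurable fun z : E3 => G (z + (x - t • x)) := measG.comp (measurable_add_const _)
        rw [e1, ← lintegral_map hFm (measurable_const_smul t)]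
        rw [Measure.map_addHaar_smul volume ht0, lintegral_smul_measure]
        have e2 : (∫⁻ z, G (z + (x - t • x))) = K := by
          rw [lintegral_add_right_eq_self G (x - t • x), hGint]
        rw [e2]
        congr 2
        simp [finrank_euclideanSpace_fin]
      calc (∫⁻ y in B, G (x + t • (y - x))) ≤ ∫⁻ y, G (x + t • (y - x)) :=
            setLIntegral_le_lintegral _ _
        _ = ENNReal.ofReal |((t:ℝ) ^ 3)⁻¹| * K := step
        _ ≤ 8 * K := by
            refine mul_le_mul_left ?_ K
            have habs : |((t:ℝ) ^ 3)⁻¹| ≤ 8 := by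
              have htp : (0:ℝ) < t := lt_trans (by norm_num) ht.1
              have h1 : (1/8 : ℝ) ≤ t ^ 3 := by
                nlinarith [ht.1, htp, sq_nonneg (t - 1/2), sq_nonneg (t + 1/2)]
              have h2 : (0:ℝ) < t ^ 3 := by positivity
              rw [abs_of_pos (by positivity)]
              rw [inv_le_comm₀ h2 (by norm_num)]
              linarith
            calc ENNReal.ofReal |((t:ℝ) ^ 3)⁻¹| ≤ ENNReal.ofReal 8 :=
                  ENNReal.ofReal_le_ofReal habs
              _ = 8 := by norm_num
    calc (∫⁻ t in Ioc (1/2:ℝ) 1, ∫⁻ y in B, G (x + t • (y - x)))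
        ≤ ∫⁻ _t in Ioc (1/2:ℝ) 1, (8 * K) := setLIntegral_mono measurable_const hinner
      _ = (8 * K) * volume (Ioc (1/2:ℝ) 1) := setLIntegral_const _ _
      _ = (8 * K) * ENNReal.ofReal (1/2) := by rw [Real.volume_Ioc]; norm_num
      _ = 4 * K := by
          rw [show (8 : ℝ≥0∞) * K * ENNReal.ofReal (1/2)
              = (8 * ENNReal.ofReal (1/2)) * K by ring]
          congr 1
          rw [show (8:ℝ≥0∞) = ENNReal.ofReal 8 by norm_num, ← ENNReal.ofReal_mul (by norm_num)]
          norm_num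
  -- double integral of J
  set D : ℝ≥0∞ := ∫⁻ x in B, ∫⁻ y in B, J x y with hD
  have hD_le : D ≤ μB * (4 * K) := by
    calc D ≤ ∫⁻ _x in B, (4 * K) := lintegral_mono fun x => inner_bound x
      _ = (4 * K) * μB := setLIntegral_const _ _
      _ = μB * (4 * K) := mul_comm _ _
  have hD2 : (∫⁻ x in B, ∫⁻ y in B, J y x) = D := by
    rw [lintegral_lintegral_swap measJ2'.aemeasurable]
  -- step 1 : averages, Jensen
  set ν : Measure E3 := (μB)⁻¹ • volume.restrict B with hν
  have hνinv : (μB)⁻¹ ≠ ⊤ := ENNReal.inv_ne_top.2 hB0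
  have hν1 : ν univ = 1 := by
    rw [hν, Measure.smul_apply, Measure.restrict_apply_univ, smul_eq_mul,
      ENNReal.inv_mul_cancel hB0 hBt]
  haveI hνfin : IsFiniteMeasure ν := ⟨by rw [hν1]; exact ENNReal.one_lt_top⟩
  set m : E3 := ⨍ w in B, f w with hm
  have hfiν : Integrable f ν := hfi.smul_measure hνinv
  have hm_eq : m = ∫ w, f w ∂ν := by
    rw [hm, setAverage_eq, hν, integral_smul_measure, ENNReal.toReal_inv]
    rfl
  have step1 : ∀ x ∈ B, ENNReal.ofReal (‖f x - m‖ ^ 2) ≤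
      (μB)⁻¹ * ∫⁻ y in B, ENNReal.ofReal (‖f x - f y‖ ^ 2) := by
    intro x hx
    have hsubν : Integrable (fun y => f x - f y) ν := (integrable_const _).sub hfiν
    have hnB : IntegrableOn (fun y => ‖f x - f y‖) B := ((integrable_const _).sub hfi).norm
    have hasmB : AEStronglyMeasurable (fun y => ‖f x - f y‖ ^ 2) (volume.restrict B) :=
      (continuous_pow 2).comp_aestronglyMeasurable
        (aestronglyMeasurable_const.sub hfi.aestronglyMeasurable).norm
    have hn2B : IntegrableOn (fun y => ‖f x - f y‖ ^ 2) B := by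
      refine Integrable.mono' ((integrable_const (2 * ‖f x‖ ^ 2)).add (hf2.const_mul 2)) hasmB ?_
      filter_upwards with y
      simp only [Pi.add_apply]
      have h1 : ‖f x - f y‖ ≤ ‖f x‖ + ‖f y‖ := norm_sub_le _ _
      have h2 : ‖(‖f x - f y‖ ^ 2)‖ = ‖f x - f y‖ ^ 2 := Real.norm_of_nonneg (sq_nonneg _)
      rw [h2]
      nlinarith [norm_nonneg (f x - f y), norm_nonneg (f x), norm_nonneg (f y), sq_nonneg (‖f x‖ - ‖f y‖)]
    have hnν : Integrable (fun y => ‖f x - f y‖) ν := hnB.smul_measure hνinv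
    have hn2ν : Integrable (fun y => ‖f x - f y‖ ^ 2) ν := hn2B.smul_measure hνinv
    have he : f x - m = ∫ y, (f x - f y) ∂ν := by
      rw [integral_sub (integrable_const _) hfiν, integral_const, measureReal_def, hν1, hm_eq]
      simp
    have hreal : ‖f x - m‖ ^ 2 ≤ ∫ y, ‖f x - f y‖ ^ 2 ∂ν := by
      have h1 : ‖f x - m‖ ≤ ∫ y, ‖f x - f y‖ ∂ν := by
        rw [he]; exact norm_integral_le_integral_norm _
      have h2 : ‖f x - m‖ ^ 2 ≤ (∫ y, ‖f x - f y‖ ∂ν) ^ 2 :=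
        pow_le_pow_left₀ (norm_nonneg _) h1 2
      exact h2.trans (sq_integral_le hν1 hnν hn2ν)
    have hνint : (∫ y, ‖f x - f y‖ ^ 2 ∂ν) = ((μB)⁻¹).toReal * ∫ y in B, ‖f x - f y‖ ^ 2 := by
      rw [hν, integral_smul_measure, smul_eq_mul]
    calc ENNReal.ofReal (‖f x - m‖ ^ 2)
        ≤ ENNReal.ofReal (((μB)⁻¹).toReal * ∫ y in B, ‖f x - f y‖ ^ 2) := by
          refine ENNReal.ofReal_le_ofReal ?_
          rw [← hνint]; exact hreal
      _ = ENNReal.ofReal (((μB)⁻¹).toReal) * ENNReal.ofReal (∫ y in B, ‖f x - f y‖ ^ 2) :=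
          ENNReal.ofReal_mul ENNReal.toReal_nonneg
      _ = (μB)⁻¹ * ∫⁻ y in B, ENNReal.ofReal (‖f x - f y‖ ^ 2) := by
          rw [ENNReal.ofReal_toReal hνinv,
            ofReal_integral_eq_lintegral_ofReal hn2B (Filter.Eventually.of_forall fun y => sq_nonneg _)]
  -- assemble
  set A : ℝ≥0∞ := ∫⁻ x in B, ∫⁻ y in B, ENNReal.ofReal (‖f x - f y‖ ^ 2) with hA
  set L : ℝ≥0∞ := ∫⁻ x in B, ENNReal.ofReal (‖f x - m‖ ^ 2) with hL
  have hL_le : L ≤ (μB)⁻¹ * A := by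
    calc L ≤ ∫⁻ x in B, (μB)⁻¹ * ∫⁻ y in B, ENNReal.ofReal (‖f x - f y‖ ^ 2) :=
          lintegral_mono_ae ((ae_restrict_iff' hBm).2 (Filter.Eventually.of_forall step1))
      _ = (μB)⁻¹ * A := lintegral_const_mul' _ _ hνinv
  have hA_le : A ≤ ENNReal.ofReal (4 * s ^ 2) * (2 * (μB * (4 * K))) := by
    have hstep : A ≤ ∫⁻ x in B, ∫⁻ y in B, ENNReal.ofReal (4 * s ^ 2) * (J x y + J y x) := by
      have hin : ∀ x, x ∈ B → (∫⁻ y in B, ENNReal.ofReal (‖f x - f y‖ ^ 2)) ≤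
          ∫⁻ y in B, ENNReal.ofReal (4 * s ^ 2) * (J x y + J y x) := fun x hx =>
        lintegral_mono_ae ((ae_restrict_iff' hBm).2
          (Filter.Eventually.of_forall fun y hy => claim2 x hx y hy))
      exact lintegral_mono_ae ((ae_restrict_iff' hBm).2 (Filter.Eventually.of_forall hin))
    have hmeasJx : ∀ x : E3, Measurable fun y => J x y := by
      intro x
      exact Measurable.lintegral_prod_right'
        (f := fun q : E3 × ℝ => G (x + q.2 • (q.1 - x)))
        (measG.comp ((continuous_const.add
          (continuous_snd.smul (continuous_fst.sub continuous_const))).measurable))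
    have hmeasJy : ∀ x : E3, Measurable fun y => J y x := by
      intro x
      exact Measurable.lintegral_prod_right'
        (f := fun q : E3 × ℝ => G (q.1 + q.2 • (x - q.1)))
        (measG.comp ((continuous_fst.add
          (continuous_snd.smul (continuous_const.sub continuous_fst))).measurable))
    have e1 : (∫⁻ x in B, ∫⁻ y in B, ENNReal.ofReal (4 * s ^ 2) * (J x y + J y x))
        = ENNReal.ofReal (4 * s ^ 2) * ((∫⁻ x in B, ∫⁻ y in B, J x y) + ∫⁻ x in B, ∫⁻ y in B, J y x) := by
      have inner_eq : ∀ x : E3, (∫⁻ y in B, ENNReal.ofReal (4 * s ^ 2) * (J x y + J y x))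
          = ENNReal.ofReal (4 * s ^ 2) * ((∫⁻ y in B, J x y) + ∫⁻ y in B, J y x) := by
        intro x
        rw [lintegral_const_mul' _ _ ENNReal.ofReal_ne_top,
          lintegral_add_left (hmeasJx x)]
      simp_rw [inner_eq]
      rw [lintegral_const_mul' _ _ ENNReal.ofReal_ne_top]
      rw [lintegral_add_left]
      exact Measurable.lintegral_prod_right' (f := Function.uncurry J) measJ2
    rw [e1, hD2] at hstep
    calc A ≤ ENNReal.ofReal (4 * s ^ 2) * (D + D) := hstep
      _ = ENNReal.ofReal (4 * s ^ 2) * (2 * D) := by ring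
      _ ≤ ENNReal.ofReal (4 * s ^ 2) * (2 * (μB * (4 * K))) := by
          exact mul_le_mul_right (mul_le_mul_right hD_le 2) _
  have hL_final : L ≤ ENNReal.ofReal (32 * s ^ 2) * K := by
    calc L ≤ (μB)⁻¹ * (ENNReal.ofReal (4 * s ^ 2) * (2 * (μB * (4 * K)))) :=
          hL_le.trans (mul_le_mul_right hA_le _)
      _ = (ENNReal.ofReal (4 * s ^ 2) * (8 * K)) * ((μB)⁻¹ * μB) := by ring
      _ = ENNReal.ofReal (4 * s ^ 2) * (8 * K) := by
          rw [ENNReal.inv_mul_cancel hB0 hBt, mul_one]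
      _ = ENNReal.ofReal (32 * s ^ 2) * K := by
          rw [show ENNReal.ofReal (4 * s ^ 2) * (8 * K) = (ENNReal.ofReal (4 * s ^ 2) * 8) * K by ring]
          congr 1
          rw [show (8:ℝ≥0∞) = ENNReal.ofReal 8 by norm_num, ← ENNReal.ofReal_mul (by positivity)]
          ring_nf
  -- convert back to real integrals
  have hLint : IntegrableOn (fun z => ‖f z - m‖ ^ 2) B := by
    have hasm : AEStronglyMeasurable (fun z => ‖f z - m‖ ^ 2) (volume.restrict B) :=
      (continuous_pow 2).comp_aestronglyMeasurable
        (hfi.aestronglyMeasurable.sub aestronglyMeasurable_const).norm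
    refine Integrable.mono' ((integrable_const (2 * ‖m‖ ^ 2)).add (hf2.const_mul 2)) hasm ?_
    filter_upwards with z
    simp only [Pi.add_apply]
    have h1 : ‖f z - m‖ ≤ ‖f z‖ + ‖m‖ := norm_sub_le _ _
    have h2 : ‖(‖f z - m‖ ^ 2)‖ = ‖f z - m‖ ^ 2 := Real.norm_of_nonneg (sq_nonneg _)
    rw [h2]
    nlinarith [norm_nonneg (f z - m), norm_nonneg (f z), norm_nonneg m, sq_nonneg (‖f z‖ - ‖m‖)]
  have hLofReal : ENNReal.ofReal (∫ z in B, ‖f z - m‖ ^ 2) = L := by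
    rw [hL, ofReal_integral_eq_lintegral_ofReal hLint (Filter.Eventually.of_forall fun z => sq_nonneg _)]
  have hKofReal : ENNReal.ofReal (∫ z in B, ‖fderiv ℝ f z‖ ^ 2) = K := by
    rw [hK, ofReal_integral_eq_lintegral_ofReal hg (Filter.Eventually.of_forall fun z => sq_nonneg _)]
  have hfinal : ENNReal.ofReal (∫ z in B, ‖f z - m‖ ^ 2) ≤
      ENNReal.ofReal (32 * s ^ 2 * ∫ z in B, ‖fderiv ℝ f z‖ ^ 2) := by
    rw [hLofReal, ENNReal.ofReal_mul (by positivity), hKofReal]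
    exact hL_final
  have hRnonneg : (0:ℝ) ≤ 32 * s ^ 2 * ∫ z in B, ‖fderiv ℝ f z‖ ^ 2 := by
    have := integral_nonneg (μ := volume.restrict B) (f := fun z => ‖fderiv ℝ f z‖ ^ 2)
      fun z => sq_nonneg _
    positivity
  exact (ENNReal.ofReal_le_ofReal_iff hRnonneg).1 hfinal



/-- One-step oscillation decay (inner step of Lemma 2.3): for `f ∈ H¹(B_r;ℝ³)` and
`θ ∈ (0,1/2]`,
`∫_{B_{θr}}|f−[f]_{B_{θr}}|² ≤ c₀θ⁵∫_{B_r}|f−[f]_{B_r}|² + c₀[θ⁵+(1+θ)²] r² ∫_{B_r}|∇f|²`. -/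
theorem stmt_9 :
    ∃ c₀ : ℝ, 0 < c₀ ∧ ∀ (r : ℝ), 0 < r → ∀ θ ∈ Ioc (0:ℝ) (1/2), ∀ f : E3 → E3,
      (∀ x ∈ ball (0:E3) r, DifferentiableAt ℝ f x) →
      IntegrableOn f (ball (0:E3) r) →
      IntegrableOn (fun x => ‖f x‖^2) (ball (0:E3) r) →
      IntegrableOn (fun x => ‖fderiv ℝ f x‖^2) (ball (0:E3) r) →
      (∫ x in ball (0:E3) (θ*r), ‖f x - ⨍ y in ball (0:E3) (θ*r), f y‖^2) ≤
        c₀ * θ^5 * (∫ x in ball (0:E3) r, ‖f x - ⨍ y in ball (0:E3) r, f y‖^2)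
        + c₀ * (θ^5 + (1+θ)^2) * r^2 * ∫ x in ball (0:E3) r, ‖fderiv ℝ f x‖^2 := by
  refine ⟨32, by norm_num, ?_⟩
  intro r hr θ hθ f hdiff hfi hf2 hg
  have hθ0 : 0 < θ := hθ.1
  have hθh : θ ≤ 1/2 := hθ.2
  set s : ℝ := θ * r with hsdef
  have hs : 0 < s := mul_pos hθ0 hr
  have hsr : s ≤ r := by rw [hsdef]; nlinarith
  have hsub : ball (0:E3) s ⊆ ball (0:E3) r := ball_subset_ball (by linarith)
  have h1 := poincare hs (fun z hz => hdiff z (hsub hz)) (hfi.mono_set hsub)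
    (hf2.mono_set hsub) (hg.mono_set hsub)
  have h2 : (∫ z in ball (0:E3) s, ‖fderiv ℝ f z‖ ^ 2) ≤
      ∫ z in ball (0:E3) r, ‖fderiv ℝ f z‖ ^ 2 :=
    setIntegral_mono_set hg (Filter.Eventually.of_forall fun z => sq_nonneg _)
      (HasSubset.Subset.eventuallyLE hsub)
  have hX : (0:ℝ) ≤ ∫ x in ball (0:E3) r, ‖f x - ⨍ y in ball (0:E3) r, f y‖ ^ 2 :=
    integral_nonneg fun x => sq_nonneg _
  have hY : (0:ℝ) ≤ ∫ x in ball (0:E3) r, ‖fderiv ℝ f x‖ ^ 2 :=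
    integral_nonneg fun x => sq_nonneg _
  have hcoef : θ ^ 2 ≤ θ ^ 5 + (1 + θ) ^ 2 := by nlinarith [pow_nonneg hθ0.le 5]
  calc (∫ x in ball (0:E3) s, ‖f x - ⨍ y in ball (0:E3) s, f y‖ ^ 2)
      ≤ 32 * s ^ 2 * ∫ z in ball (0:E3) s, ‖fderiv ℝ f z‖ ^ 2 := h1
    _ ≤ 32 * s ^ 2 * ∫ z in ball (0:E3) r, ‖fderiv ℝ f z‖ ^ 2 := by
        apply mul_le_mul_of_nonneg_left h2 (by positivity)
    _ = 32 * θ ^ 2 * r ^ 2 * ∫ z in ball (0:E3) r, ‖fderiv ℝ f z‖ ^ 2 := by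
        rw [hsdef]; ring
    _ ≤ 32 * (θ ^ 5 + (1 + θ) ^ 2) * r ^ 2 * ∫ z in ball (0:E3) r, ‖fderiv ℝ f z‖ ^ 2 := by
        have hr2 : (0:ℝ) ≤ r ^ 2 := sq_nonneg r
        nlinarith [mul_le_mul_of_nonneg_right hcoef (mul_nonneg hr2 hY)]
    _ ≤ 32 * θ ^ 5 * (∫ x in ball (0:E3) r, ‖f x - ⨍ y in ball (0:E3) r, f y‖ ^ 2)
        + 32 * (θ ^ 5 + (1 + θ) ^ 2) * r ^ 2 * ∫ x in ball (0:E3) r, ‖fderiv ℝ f x‖ ^ 2 := by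
        nlinarith [mul_nonneg (mul_nonneg (by norm_num : (0:ℝ) ≤ 32) (pow_nonneg hθ0.le 5)) hX]
end
end

section
/- (Scaled mean-oscillation recursion) Let f ∈ L²_t H¹_x on Q_{1/2} and define H̃(f;r) = (1/r³)∬_{Q_r}|f − [f]_{B_r}|² dx dt and E(f;r) = (1/r)∬_{Q_r}|∇f|² dx dt. Then there exist a universal constant c₀ and θ₀ ∈ (0,1/2] such that for every θ ∈ (0,θ₀] and r ∈ (0,1/2): H̃(f;θr) ≤ c₀θ² H̃(f;r) + c₀[θ² + (1+θ)²/θ³] E(f;r). -/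
open MeasureTheory Metric Set
open scoped ENNReal NNReal

noncomputable section

/-- The scaled mean-oscillation quantity `H̃(f;r) = (1/r³)∬_{Q_r}|f−[f]_{B_r}|²`. -/
def Htilde (f : ℝ → E3 → E3) (r : ℝ) : ℝ :=
  (1/r^3) * ∫ t in Ioo (-(r^2)) (0:ℝ), ∫ x in ball (0:E3) r,
    ‖f t x - ⨍ y in ball (0:E3) r, f t y‖^2

/-- The scaled energy `E(f;r) = (1/r)∬_{Q_r}|∇f|²`. -/
def Escaled (f : ℝ → E3 → E3) (r : ℝ) : ℝ :=
  (1/r) * ∫ t in Ioo (-(r^2)) (0:ℝ), ∫ x in ball (0:E3) r, ‖fderiv ℝ (f t) x‖^2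

lemma lintegral_sq_le {α : Type*} [MeasurableSpace α] (μ : Measure α) (u : α → ℝ≥0∞)
    (hu : AEMeasurable u μ) : (∫⁻ a, u a ∂μ) ^ 2 ≤ μ univ * ∫⁻ a, (u a) ^ 2 ∂μ := by
  have hconj : Real.HolderConjugate 2 2 := Real.HolderConjugate.two_two
  have h := ENNReal.lintegral_mul_le_Lp_mul_Lq μ hconj hu
    (aemeasurable_const (b := (1:ℝ≥0∞)))
  simp only [Pi.mul_apply, mul_one, ENNReal.one_rpow, lintegral_const, one_mul] at h
  have key : ∀ x : ℝ≥0∞, (x ^ (1/(2:ℝ))) ^ 2 = x := by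
    intro x
    rw [← ENNReal.rpow_natCast (x ^ (1/(2:ℝ))) 2, ← ENNReal.rpow_mul]
    norm_num
  calc (∫⁻ a, u a ∂μ) ^ 2
      ≤ ((∫⁻ a, u a ^ (2:ℝ) ∂μ) ^ (1/(2:ℝ)) * (μ univ) ^ (1/(2:ℝ))) ^ 2 :=
        pow_le_pow_left' h 2
    _ = (∫⁻ a, u a ^ (2:ℝ) ∂μ) * μ univ := by rw [mul_pow, key, key]
    _ = μ univ * ∫⁻ a, (u a) ^ 2 ∂μ := by
        rw [mul_comm]; congr 1; apply lintegral_congr; intro a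
        rw [← ENNReal.rpow_natCast (u a) 2]; norm_num

lemma lintegral_comp_affine (F : E3 → ℝ≥0∞) (hF : Measurable F) {s : ℝ} (hs : s ≠ 0) (c : E3) :
    ∫⁻ x, F (c + s • x) = ENNReal.ofReal |(s ^ 3)⁻¹| * ∫⁻ z, F z := by
  have h1 : ∫⁻ x, F (c + s • x) = ∫⁻ x, (fun z => F (c + z)) (s • x) := rfl
  have hFc : Measurable fun z => F (c + z) := hF.comp (measurable_const_add c)
  rw [h1, ← lintegral_map hFc (measurable_const_smul s)]
  have : (Measure.map (fun x : E3 => s • x) volume) = Measure.map (s • ·) volume := rfl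
  rw [this, Measure.map_addHaar_smul volume hs, lintegral_smul_measure]
  have h3 : Module.finrank ℝ E3 = 3 := finrank_euclideanSpace_fin
  rw [h3, lintegral_add_left_eq_self (fun z => F z) c, smul_eq_mul]

/-- FTC + Cauchy-Schwarz along a segment inside the ball. -/
lemma claim2 (u : E3 → E3) {ρ : ℝ}
    (hd : ∀ x ∈ ball (0:E3) ρ, DifferentiableAt ℝ u x)
    {x y : E3} (hx : x ∈ ball (0:E3) ρ) (hy : y ∈ ball (0:E3) ρ) :
    (‖u x - u y‖₊ : ℝ≥0∞) ^ 2 ≤ (‖x - y‖₊ : ℝ≥0∞) ^ 2 *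
      ∫⁻ s in Ioo (0:ℝ) 1,
        (ball (0:E3) ρ).indicator (fun z => (‖fderiv ℝ u z‖₊ : ℝ≥0∞) ^ 2) (y + s • (x - y)) := by
  set B := ball (0:E3) ρ with hB
  have hseg : ∀ s ∈ Icc (0:ℝ) 1, y + s • (x - y) ∈ B := by
    intro s hs
    have h1 : (1 - s) • y + s • x ∈ B :=
      (convex_ball (0:E3) ρ) hy hx (by linarith [hs.2]) hs.1 (by ring)
    have h2 : y + s • (x - y) = (1 - s) • y + s • x := by module
    rw [h2]; exact h1
  have hGseg : ∀ᵐ s ∂volume, s ∈ Ioo (0:ℝ) 1 →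
      B.indicator (fun z => (‖fderiv ℝ u z‖₊ : ℝ≥0∞) ^ 2) (y + s • (x - y))
        = (‖fderiv ℝ u (y + s • (x - y))‖₊ : ℝ≥0∞) ^ 2 := by
    refine ae_of_all _ fun s hs => ?_
    exact indicator_of_mem (hseg s ⟨hs.1.le, hs.2.le⟩) _
  rw [setLIntegral_congr_fun_ae measurableSet_Ioo hGseg]
  by_cases hxy : x = y
  · simp [hxy]
  set A := ∫⁻ s in Ioo (0:ℝ) 1, (‖fderiv ℝ u (y + s • (x - y))‖₊ : ℝ≥0∞) ^ 2 with hA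
  have hne : (‖x - y‖₊ : ℝ≥0∞) ≠ 0 := by
    simp only [ne_eq, ENNReal.coe_eq_zero, nnnorm_eq_zero, sub_eq_zero]
    exact hxy
  by_cases hAtop : A = ⊤
  · rw [hAtop, ENNReal.mul_top (pow_ne_zero 2 hne)]
    exact le_top
  -- A finite
  set w : ℝ → ℝ≥0∞ := fun s => (‖fderiv ℝ u (y + s • (x - y))‖₊ : ℝ≥0∞) with hw
  have hwm : Measurable w := by
    have h0 : Measurable fun s : ℝ => fderiv ℝ u (y + s • (x - y)) :=
      (measurable_fderiv ℝ u).comp (by fun_prop)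
    exact h0.enorm
  have hwint : ∫⁻ s in Ioo (0:ℝ) 1, w s ≠ ⊤ := by
    intro htop
    have hcs := lintegral_sq_le (volume.restrict (Ioo (0:ℝ) 1)) w hwm.aemeasurable
    rw [htop] at hcs
    simp only [Measure.restrict_apply_univ, Real.volume_Ioo, sub_zero, ENNReal.ofReal_one,
      one_mul] at hcs
    have htt : (⊤:ℝ≥0∞) ^ 2 = ⊤ := by simp
    rw [htt] at hcs
    exact hAtop (top_le_iff.mp hcs)
  set d : ℝ → E3 := fun s => (fderiv ℝ u (y + s • (x - y))) (x - y) with hdd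
  have hdmeas : Measurable d := (measurable_fderiv_apply_const ℝ (f := u) (x - y)).comp (by fun_prop)
  have hdbd : ∀ s, (‖d s‖₊ : ℝ≥0∞) ≤ w s * ‖x - y‖₊ := by
    intro s
    show (‖d s‖₊ : ℝ≥0∞) ≤ (‖fderiv ℝ u (y + s • (x - y))‖₊ : ℝ≥0∞) * ‖x - y‖₊
    exact_mod_cast (fderiv ℝ u (y + s • (x - y))).le_opNNNorm (x - y)
  have hdint : IntegrableOn d (Ioo (0:ℝ) 1) := by
    refine ⟨hdmeas.aestronglyMeasurable, ?_⟩
    show (∫⁻ s in Ioo (0:ℝ) 1, (‖d s‖₊ : ℝ≥0∞)) < ⊤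
    calc ∫⁻ s in Ioo (0:ℝ) 1, (‖d s‖₊ : ℝ≥0∞)
        ≤ ∫⁻ s in Ioo (0:ℝ) 1, w s * ‖x - y‖₊ := lintegral_mono fun s => hdbd s
      _ = (∫⁻ s in Ioo (0:ℝ) 1, w s) * ‖x - y‖₊ := lintegral_mul_const _ hwm
      _ < ⊤ := ENNReal.mul_lt_top (lt_top_iff_ne_top.mpr hwint) ENNReal.coe_lt_top
  have hder : ∀ s ∈ Icc (0:ℝ) 1, HasDerivAt (fun τ : ℝ => u (y + τ • (x - y))) (d s) s := by
    intro s hs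
    have h1 : HasDerivAt (fun τ : ℝ => y + τ • (x - y)) (x - y) s := by
      simpa using ((hasDerivAt_id s).smul_const (x - y)).const_add y
    exact (hd _ (hseg s hs)).hasFDerivAt.comp_hasDerivAt s h1
  have hii : IntervalIntegrable d volume 0 1 := by
    rw [intervalIntegrable_iff_integrableOn_Ioo_of_le zero_le_one]; exact hdint
  have hFTC : ∫ s in (0:ℝ)..1, d s = u x - u y := by
    have h := intervalIntegral.integral_eq_sub_of_hasDerivAt
      (f := fun τ : ℝ => u (y + τ • (x - y))) (f' := d)
      (fun s hs => hder s (by rwa [uIcc_of_le zero_le_one] at hs)) hii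
    simpa using h
  have hnorm : ‖u x - u y‖ ≤ ∫ s in Ioo (0:ℝ) 1, ‖d s‖ := by
    rw [← hFTC]
    calc ‖∫ s in (0:ℝ)..1, d s‖ ≤ ∫ s in (0:ℝ)..1, ‖d s‖ :=
          intervalIntegral.norm_integral_le_integral_norm zero_le_one
      _ = ∫ s in Ioc (0:ℝ) 1, ‖d s‖ := by
          rw [intervalIntegral.integral_of_le zero_le_one]
      _ = ∫ s in Ioo (0:ℝ) 1, ‖d s‖ := by
          exact setIntegral_congr_set Ioo_ae_eq_Ioc.symm
  have h1 : (‖u x - u y‖₊ : ℝ≥0∞) ≤ ∫⁻ s in Ioo (0:ℝ) 1, (‖d s‖₊ : ℝ≥0∞) := by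
    rw [← enorm_eq_nnnorm, ← ofReal_norm]
    calc ENNReal.ofReal ‖u x - u y‖ ≤ ENNReal.ofReal (∫ s in Ioo (0:ℝ) 1, ‖d s‖) :=
          ENNReal.ofReal_le_ofReal hnorm
      _ = ∫⁻ s in Ioo (0:ℝ) 1, ENNReal.ofReal ‖d s‖ :=
          ofReal_integral_eq_lintegral_ofReal hdint.norm (ae_of_all _ fun s => norm_nonneg _)
      _ = ∫⁻ s in Ioo (0:ℝ) 1, (‖d s‖₊ : ℝ≥0∞) := by
          apply lintegral_congr; intro s; rw [ofReal_norm, enorm_eq_nnnorm]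
  calc (‖u x - u y‖₊ : ℝ≥0∞) ^ 2
      ≤ (∫⁻ s in Ioo (0:ℝ) 1, (‖d s‖₊ : ℝ≥0∞)) ^ 2 := pow_le_pow_left' h1 2
    _ ≤ (volume.restrict (Ioo (0:ℝ) 1)) univ * ∫⁻ s in Ioo (0:ℝ) 1, (‖d s‖₊ : ℝ≥0∞) ^ 2 :=
          lintegral_sq_le _ _ hdmeas.enorm.aemeasurable
    _ = ∫⁻ s in Ioo (0:ℝ) 1, (‖d s‖₊ : ℝ≥0∞) ^ 2 := by
          simp [Real.volume_Ioo]
    _ ≤ ∫⁻ s in Ioo (0:ℝ) 1, (‖x - y‖₊ : ℝ≥0∞) ^ 2 * w s ^ 2 := by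
          apply lintegral_mono; intro s
          calc (‖d s‖₊ : ℝ≥0∞) ^ 2 ≤ (w s * ‖x - y‖₊) ^ 2 := pow_le_pow_left' (hdbd s) 2
            _ = (‖x - y‖₊ : ℝ≥0∞) ^ 2 * w s ^ 2 := by ring
    _ = (‖x - y‖₊ : ℝ≥0∞) ^ 2 * A := by
          rw [lintegral_const_mul _ (hwm.pow_const 2)]

/-- Jensen / Cauchy-Schwarz: squared distance to the average is controlled by the average
of squared differences. -/
lemma claim1 (u : E3 → E3) {ρ : ℝ} (hρ0 : 0 < ρ)
    (hiB : IntegrableOn u (ball (0:E3) ρ)) {x : E3} :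
    (‖u x - ⨍ y in ball (0:E3) ρ, u y‖₊ : ℝ≥0∞) ^ 2
      ≤ (volume (ball (0:E3) ρ))⁻¹ * ∫⁻ y in ball (0:E3) ρ, (‖u x - u y‖₊ : ℝ≥0∞) ^ 2 := by
  set B := ball (0:E3) ρ with hB
  have hμB0 : volume B ≠ 0 := (measure_ball_pos volume 0 hρ0).ne'
  have hμBt : volume B ≠ ⊤ := measure_ball_lt_top.ne
  set c : E3 := ⨍ y in B, u y with hc
  have hconst : IntegrableOn (fun _ : E3 => u x) B := integrableOn_const measure_ball_lt_top.ne
  have hsub : IntegrableOn (fun y => u x - u y) B := hconst.sub hiB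
  set a : ℝ := (volume B).toReal with ha
  have ha0 : 0 < a := ENNReal.toReal_pos hμB0 hμBt
  have h0 : u x - c = ⨍ y in B, (u x - u y) := by
    rw [hc, setAverage_eq, setAverage_eq, integral_sub hconst hiB, setIntegral_const,
      smul_sub, smul_smul, measureReal_def, ← ha, inv_mul_cancel₀ ha0.ne', one_smul]
  have hnorm : ‖u x - c‖ ≤ a⁻¹ * ∫ y in B, ‖u x - u y‖ := by
    rw [h0, setAverage_eq, measureReal_def, ← ha, norm_smul, Real.norm_eq_abs, abs_of_nonneg (inv_nonneg.mpr ha0.le)]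
    exact mul_le_mul_of_nonneg_left (norm_integral_le_integral_norm _) (inv_nonneg.mpr ha0.le)
  have h2 : (‖u x - c‖₊ : ℝ≥0∞) ≤ (volume B)⁻¹ * ∫⁻ y in B, (‖u x - u y‖₊ : ℝ≥0∞) := by
    rw [← enorm_eq_nnnorm, ← ofReal_norm]
    calc ENNReal.ofReal ‖u x - c‖ ≤ ENNReal.ofReal (a⁻¹ * ∫ y in B, ‖u x - u y‖) :=
          ENNReal.ofReal_le_ofReal hnorm
      _ = ENNReal.ofReal a⁻¹ * ENNReal.ofReal (∫ y in B, ‖u x - u y‖) :=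
          ENNReal.ofReal_mul (inv_nonneg.mpr ha0.le)
      _ = (volume B)⁻¹ * ∫⁻ y in B, (‖u x - u y‖₊ : ℝ≥0∞) := by
          congr 1
          · rw [ENNReal.ofReal_inv_of_pos ha0, ha, ENNReal.ofReal_toReal hμBt]
          · rw [ofReal_integral_eq_lintegral_ofReal hsub.norm (ae_of_all _ fun y => norm_nonneg _)]
            apply lintegral_congr; intro y; rw [ofReal_norm, enorm_eq_nnnorm]
  have hCS := lintegral_sq_le (volume.restrict B) (fun y => (‖u x - u y‖₊ : ℝ≥0∞))
    hsub.aestronglyMeasurable.enorm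
  rw [Measure.restrict_apply_univ] at hCS
  calc (‖u x - c‖₊ : ℝ≥0∞) ^ 2
      ≤ ((volume B)⁻¹ * ∫⁻ y in B, (‖u x - u y‖₊ : ℝ≥0∞)) ^ 2 := pow_le_pow_left' h2 2
    _ = ((volume B)⁻¹) ^ 2 * (∫⁻ y in B, (‖u x - u y‖₊ : ℝ≥0∞)) ^ 2 := mul_pow _ _ 2
    _ ≤ ((volume B)⁻¹) ^ 2 * (volume B * ∫⁻ y in B, (‖u x - u y‖₊ : ℝ≥0∞) ^ 2) :=
          mul_le_mul_right hCS _
    _ = ((volume B)⁻¹ * volume B) * ((volume B)⁻¹ * ∫⁻ y in B, (‖u x - u y‖₊ : ℝ≥0∞) ^ 2) := by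
          ring
    _ = (volume B)⁻¹ * ∫⁻ y in B, (‖u x - u y‖₊ : ℝ≥0∞) ^ 2 := by
          rw [ENNReal.inv_mul_cancel hμB0 hμBt, one_mul]

/-- Key substitution bound: for each `s ∈ (0,1)`, the double integral with the affine
composition is bounded uniformly. -/
lemma stepJ (G : E3 → ℝ≥0∞) (hG : Measurable G) {ρ : ℝ} (hρ0 : 0 < ρ) {s : ℝ}
    (hs : s ∈ Ioo (0:ℝ) 1) :
    (∫⁻ x in ball (0:E3) ρ, ∫⁻ y in ball (0:E3) ρ,
        (‖x - y‖₊ : ℝ≥0∞) ^ 2 * G (y + s • (x - y)))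
      ≤ ENNReal.ofReal (32 * ρ ^ 5) * volume (ball (0:E3) 1) * ∫⁻ z, G z := by
  set B := ball (0:E3) ρ with hB
  set τ : ℝ := 1 - s with hτ
  have hτ0 : 0 < τ := by simp only [hτ]; linarith [hs.2]
  set R : ℝ := 2 * ρ * τ with hR
  have hR0 : 0 < R := by positivity
  -- pointwise bound of the inner integrand
  have hpt : ∀ x ∈ B, ∀ y ∈ B,
      (‖x - y‖₊ : ℝ≥0∞) ^ 2 * G (y + s • (x - y))
        ≤ ENNReal.ofReal (4 * ρ ^ 2) * (ball x R).indicator G (y + s • (x - y)) := by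
    intro x hx y hy
    rw [mem_ball_zero_iff] at hx hy
    have hxy : ‖x - y‖ < 2 * ρ := by
      calc ‖x - y‖ ≤ ‖x‖ + ‖y‖ := norm_sub_le _ _
        _ < 2 * ρ := by linarith
    have h1 : (‖x - y‖₊ : ℝ≥0∞) ^ 2 ≤ ENNReal.ofReal (4 * ρ ^ 2) := by
      rw [← enorm_eq_nnnorm, ← ofReal_norm]
      calc (ENNReal.ofReal ‖x - y‖) ^ 2 ≤ (ENNReal.ofReal (2 * ρ)) ^ 2 :=
            pow_le_pow_left' (ENNReal.ofReal_le_ofReal hxy.le) 2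
        _ = ENNReal.ofReal (4 * ρ ^ 2) := by
            rw [← ENNReal.ofReal_pow (by positivity)]; ring_nf
    have hmem : y + s • (x - y) ∈ ball x R := by
      rw [mem_ball, dist_eq_norm]
      have he : y + s • (x - y) - x = τ • (y - x) := by
        simp only [hτ]; module
      rw [he, norm_smul, Real.norm_eq_abs, abs_of_pos hτ0]
      have h2 : ‖y - x‖ < 2 * ρ := by rw [norm_sub_rev]; exact hxy
      calc τ * ‖y - x‖ < τ * (2 * ρ) := by exact mul_lt_mul_of_pos_left h2 hτ0
        _ = R := by rw [hR]; ring
    rw [indicator_of_mem hmem]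
    exact mul_le_mul' h1 le_rfl
  -- measurability of the slice integral
  have hjoint : Measurable fun p : E3 × E3 => (ball p.1 R).indicator G p.2 := by
    have heq : (fun p : E3 × E3 => (ball p.1 R).indicator G p.2)
        = {p : E3 × E3 | dist p.2 p.1 < R}.indicator (fun p => G p.2) := by
      funext p
      simp only [Set.indicator_apply, mem_ball, mem_setOf_eq]
      rfl
    rw [heq]
    have hopen : MeasurableSet {p : E3 × E3 | dist p.2 p.1 < R} :=
      (isOpen_lt (by fun_prop) continuous_const).measurableSet
    exact (hG.comp measurable_snd).indicator hopen
  have hm1 : Measurable fun x : E3 => ∫⁻ z, (ball x R).indicator G z :=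
    hjoint.lintegral_prod_right'
  have hinner : ∀ x ∈ B, (∫⁻ y in B, (‖x - y‖₊ : ℝ≥0∞) ^ 2 * G (y + s • (x - y)))
      ≤ ENNReal.ofReal (4 * ρ ^ 2) *
          (ENNReal.ofReal |(τ ^ 3)⁻¹| * ∫⁻ z, (ball x R).indicator G z) := by
    intro x hx
    have hmeasy : Measurable fun y : E3 => (ball x R).indicator G (y + s • (x - y)) :=
      (hG.indicator measurableSet_ball).comp (by fun_prop)
    calc (∫⁻ y in B, (‖x - y‖₊ : ℝ≥0∞) ^ 2 * G (y + s • (x - y)))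
        ≤ ∫⁻ y in B, ENNReal.ofReal (4 * ρ ^ 2) * (ball x R).indicator G (y + s • (x - y)) :=
          setLIntegral_mono' measurableSet_ball (fun y hy => hpt x hx y hy)
      _ ≤ ∫⁻ y, ENNReal.ofReal (4 * ρ ^ 2) * (ball x R).indicator G (y + s • (x - y)) :=
          setLIntegral_le_lintegral _ _
      _ = ENNReal.ofReal (4 * ρ ^ 2) * ∫⁻ y, (ball x R).indicator G (y + s • (x - y)) :=
          lintegral_const_mul _ hmeasy
      _ = ENNReal.ofReal (4 * ρ ^ 2) *
            (ENNReal.ofReal |(τ ^ 3)⁻¹| * ∫⁻ z, (ball x R).indicator G z) := by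
          congr 1
          have hrw : (fun y : E3 => (ball x R).indicator G (y + s • (x - y)))
              = fun y : E3 => (ball x R).indicator G ((s • x) + τ • y) := by
            funext y; congr 1; simp only [hτ]; module
          rw [hrw]
          exact lintegral_comp_affine _ (hG.indicator measurableSet_ball) hτ0.ne' (s • x)
  have hx2 : (∫⁻ x in B, ∫⁻ y in B, (‖x - y‖₊ : ℝ≥0∞) ^ 2 * G (y + s • (x - y)))
      ≤ ENNReal.ofReal (4 * ρ ^ 2) * ENNReal.ofReal |(τ ^ 3)⁻¹| *
          ∫⁻ x in B, ∫⁻ z, (ball x R).indicator G z := by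
    calc (∫⁻ x in B, ∫⁻ y in B, (‖x - y‖₊ : ℝ≥0∞) ^ 2 * G (y + s • (x - y)))
        ≤ ∫⁻ x in B, ENNReal.ofReal (4 * ρ ^ 2) *
            (ENNReal.ofReal |(τ ^ 3)⁻¹| * ∫⁻ z, (ball x R).indicator G z) :=
          setLIntegral_mono' measurableSet_ball hinner
      _ = ENNReal.ofReal (4 * ρ ^ 2) * ENNReal.ofReal |(τ ^ 3)⁻¹| *
            ∫⁻ x in B, ∫⁻ z, (ball x R).indicator G z := by
          simp only [← mul_assoc]
          exact lintegral_const_mul _ hm1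
  have hswap : (∫⁻ x in B, ∫⁻ z, (ball x R).indicator G z)
      = ∫⁻ z, ∫⁻ x in B, (ball x R).indicator G z :=
    lintegral_lintegral_swap hjoint.aemeasurable
  have hz : ∀ z : E3, (∫⁻ x in B, (ball x R).indicator G z)
      ≤ G z * (ENNReal.ofReal (R ^ 3) * volume (ball (0:E3) 1)) := by
    intro z
    have hsym : ∀ x : E3, (ball x R).indicator G z = (ball z R).indicator (fun _ => G z) x := by
      intro x
      by_cases h : dist z x < R
      · rw [indicator_of_mem (mem_ball.mpr h),
          indicator_of_mem (mem_ball.mpr (by rwa [dist_comm]))]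
      · rw [indicator_of_notMem (fun hc => h (mem_ball.mp hc)),
          indicator_of_notMem (fun hc => h (by rw [dist_comm]; exact mem_ball.mp hc))]
    calc (∫⁻ x in B, (ball x R).indicator G z)
        = ∫⁻ x in B, (ball z R).indicator (fun _ => G z) x := by
          apply lintegral_congr; intro x; exact hsym x
      _ ≤ ∫⁻ x, (ball z R).indicator (fun _ => G z) x := setLIntegral_le_lintegral _ _
      _ = G z * volume (ball z R) := by
          rw [lintegral_indicator measurableSet_ball, setLIntegral_const]
      _ = G z * (ENNReal.ofReal (R ^ 3) * volume (ball (0:E3) 1)) := by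
          rw [Measure.addHaar_ball_of_pos volume z hR0, finrank_euclideanSpace_fin]
  have hzz : (∫⁻ z, ∫⁻ x in B, (ball x R).indicator G z)
      ≤ (∫⁻ z, G z) * (ENNReal.ofReal (R ^ 3) * volume (ball (0:E3) 1)) := by
    calc (∫⁻ z, ∫⁻ x in B, (ball x R).indicator G z)
        ≤ ∫⁻ z, G z * (ENNReal.ofReal (R ^ 3) * volume (ball (0:E3) 1)) :=
          lintegral_mono fun z => hz z
      _ = (∫⁻ z, G z) * (ENNReal.ofReal (R ^ 3) * volume (ball (0:E3) 1)) :=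
          lintegral_mul_const _ hG
  have hconst : ENNReal.ofReal (4 * ρ ^ 2) * ENNReal.ofReal |(τ ^ 3)⁻¹| *
      ENNReal.ofReal (R ^ 3) = ENNReal.ofReal (32 * ρ ^ 5) := by
    rw [← ENNReal.ofReal_mul (by positivity), ← ENNReal.ofReal_mul (by positivity)]
    congr 1
    rw [abs_of_pos (by positivity), hR]
    field_simp
    ring
  calc (∫⁻ x in B, ∫⁻ y in B, (‖x - y‖₊ : ℝ≥0∞) ^ 2 * G (y + s • (x - y)))
      ≤ ENNReal.ofReal (4 * ρ ^ 2) * ENNReal.ofReal |(τ ^ 3)⁻¹| *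
          ∫⁻ x in B, ∫⁻ z, (ball x R).indicator G z := hx2
    _ ≤ ENNReal.ofReal (4 * ρ ^ 2) * ENNReal.ofReal |(τ ^ 3)⁻¹| *
          ((∫⁻ z, G z) * (ENNReal.ofReal (R ^ 3) * volume (ball (0:E3) 1))) := by
        rw [hswap]; exact mul_le_mul_right hzz _
    _ = ENNReal.ofReal (4 * ρ ^ 2) * ENNReal.ofReal |(τ ^ 3)⁻¹| * ENNReal.ofReal (R ^ 3) *
          volume (ball (0:E3) 1) * ∫⁻ z, G z := by ring
    _ = ENNReal.ofReal (32 * ρ ^ 5) * volume (ball (0:E3) 1) * ∫⁻ z, G z := by rw [hconst]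

set_option maxHeartbeats 2000000 in
/-- L² Poincaré inequality on a ball, for functions differentiable on `ball 0 (1/2)`. -/
lemma poincare_ball (u : E3 → E3) {ρ : ℝ} (hρ0 : 0 < ρ) (hρh : ρ < 1/2)
    (hd : ∀ x ∈ ball (0:E3) (1/2), DifferentiableAt ℝ u x)
    (hi : IntegrableOn u (ball (0:E3) (1/2)))
    (hgi : IntegrableOn (fun x => ‖fderiv ℝ u x‖ ^ 2) (ball (0:E3) (1/2))) :
    ∫ x in ball (0:E3) ρ, ‖u x - ⨍ y in ball (0:E3) ρ, u y‖ ^ 2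
      ≤ 32 * ρ ^ 2 * ∫ x in ball (0:E3) ρ, ‖fderiv ℝ u x‖ ^ 2 := by
  set B := ball (0:E3) ρ with hB
  have hBsub : B ⊆ ball (0:E3) (1/2) := ball_subset_ball (by linarith)
  have hiB : IntegrableOn u B := hi.mono_set hBsub
  have hgiB : IntegrableOn (fun x => ‖fderiv ℝ u x‖ ^ 2) B := hgi.mono_set hBsub
  have hdB : ∀ x ∈ B, DifferentiableAt ℝ u x := fun x hx => hd x (hBsub hx)
  have hμB0 : volume B ≠ 0 := (measure_ball_pos volume 0 hρ0).ne'
  have hμBt : volume B ≠ ⊤ := measure_ball_lt_top.ne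
  set v₁ : ℝ≥0∞ := volume (ball (0:E3) 1) with hv₁
  have hv10 : v₁ ≠ 0 := (measure_ball_pos volume 0 one_pos).ne'
  have hv1t : v₁ ≠ ⊤ := measure_ball_lt_top.ne
  set G : E3 → ℝ≥0∞ := B.indicator fun z => (‖fderiv ℝ u z‖₊ : ℝ≥0∞) ^ 2 with hG
  have hGm : Measurable G := ((measurable_fderiv ℝ u).enorm.pow_const 2).indicator
    measurableSet_ball
  set Dq : ℝ≥0∞ := ∫⁻ z in B, (‖fderiv ℝ u z‖₊ : ℝ≥0∞) ^ 2 with hDq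
  have hGint : ∫⁻ z, G z = Dq := lintegral_indicator measurableSet_ball _
  have hnn_eq : ∀ L : E3 →L[ℝ] E3, (‖(‖L‖ ^ 2 : ℝ)‖₊ : ℝ≥0∞) = (‖L‖₊ : ℝ≥0∞) ^ 2 := by
    intro L
    rw [← enorm_eq_nnnorm, ← ofReal_norm, ← enorm_eq_nnnorm, ← ofReal_norm,
      ← ENNReal.ofReal_pow (norm_nonneg _)]
    congr 1
    rw [norm_pow, norm_norm]
  have hDqtop : Dq ≠ ⊤ := by
    have h2 := hgiB.2
    rw [HasFiniteIntegral] at h2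
    have : (∫⁻ z in B, ‖(‖fderiv ℝ u z‖ ^ 2 : ℝ)‖ₑ) = Dq := by
      rw [hDq]; apply lintegral_congr; intro z; exact hnn_eq _
    rw [this] at h2
    exact h2.ne
  set c : E3 := ⨍ y in B, u y with hc
  set L : ℝ≥0∞ := ∫⁻ x in B, (‖u x - c‖₊ : ℝ≥0∞) ^ 2 with hL
  set Φ : E3 → E3 → ℝ≥0∞ :=
    fun x y => (‖x - y‖₊ : ℝ≥0∞) ^ 2 * ∫⁻ s in Ioo (0:ℝ) 1, G (y + s • (x - y)) with hΦ
  have haff3 : Measurable fun p : (E3 × E3) × ℝ => G (p.1.2 + p.2 • (p.1.1 - p.1.2)) :=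
    hGm.comp (by fun_prop)
  have hsint : Measurable fun p : E3 × E3 => ∫⁻ s in Ioo (0:ℝ) 1, G (p.2 + s • (p.1 - p.2)) :=
    Measurable.lintegral_prod_right' (f := fun p : (E3 × E3) × ℝ =>
      G (p.1.2 + p.2 • (p.1.1 - p.1.2))) haff3
  have hΦum : Measurable fun p : E3 × E3 => Φ p.1 p.2 :=
    ((measurable_fst.sub measurable_snd).enorm.pow_const 2).mul hsint
  have claim12 : ∀ x ∈ B, (‖u x - c‖₊ : ℝ≥0∞) ^ 2
      ≤ (volume B)⁻¹ * ∫⁻ y in B, Φ x y := by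
    intro x hx
    refine (claim1 u hρ0 hiB).trans (mul_le_mul_right ?_ _)
    exact setLIntegral_mono' measurableSet_ball (fun y hy => claim2 u hdB hx hy)
  have hΨm : Measurable fun x : E3 => ∫⁻ y in B, Φ x y :=
    Measurable.lintegral_prod_right' (f := fun p : E3 × E3 => Φ p.1 p.2) hΦum
  have hL1 : L ≤ (volume B)⁻¹ * ∫⁻ x in B, ∫⁻ y in B, Φ x y := by
    calc L ≤ ∫⁻ x in B, (volume B)⁻¹ * ∫⁻ y in B, Φ x y :=
          setLIntegral_mono' measurableSet_ball claim12
      _ = (volume B)⁻¹ * ∫⁻ x in B, ∫⁻ y in B, Φ x y := lintegral_const_mul _ hΨm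
  -- swap the s-integral outside
  have hψm : ∀ x : E3, Measurable fun q : E3 × ℝ =>
      (‖x - q.1‖₊ : ℝ≥0∞) ^ 2 * G (q.1 + q.2 • (x - q.1)) := fun x =>
    ((measurable_const.sub measurable_fst).enorm.pow_const 2).mul (hGm.comp (by fun_prop))
  have hT1 : (∫⁻ x in B, ∫⁻ y in B, Φ x y)
      = ∫⁻ x in B, ∫⁻ s in Ioo (0:ℝ) 1, ∫⁻ y in B,
          (‖x - y‖₊ : ℝ≥0∞) ^ 2 * G (y + s • (x - y)) := by
    apply lintegral_congr; intro x
    have h1 : (∫⁻ y in B, Φ x y) = ∫⁻ y in B, ∫⁻ s in Ioo (0:ℝ) 1,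
        (‖x - y‖₊ : ℝ≥0∞) ^ 2 * G (y + s • (x - y)) := by
      apply lintegral_congr; intro y
      exact (lintegral_const_mul _ (hGm.comp (by fun_prop))).symm
    rw [h1]
    exact lintegral_lintegral_swap (hψm x).aemeasurable
  have hjm2 : Measurable fun p : E3 × ℝ => ∫⁻ y in B,
      (‖p.1 - y‖₊ : ℝ≥0∞) ^ 2 * G (y + p.2 • (p.1 - y)) := by
    apply Measurable.lintegral_prod_right' (f := fun q : (E3 × ℝ) × E3 =>
      (‖q.1.1 - q.2‖₊ : ℝ≥0∞) ^ 2 * G (q.2 + q.1.2 • (q.1.1 - q.2)))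
    exact ((measurable_fst.fst.sub measurable_snd).enorm.pow_const 2).mul
      (hGm.comp (by fun_prop))
  have hT2 : (∫⁻ x in B, ∫⁻ y in B, Φ x y)
      = ∫⁻ s in Ioo (0:ℝ) 1, ∫⁻ x in B, ∫⁻ y in B,
          (‖x - y‖₊ : ℝ≥0∞) ^ 2 * G (y + s • (x - y)) := by
    rw [hT1]
    exact lintegral_lintegral_swap hjm2.aemeasurable
  have hT3 : (∫⁻ x in B, ∫⁻ y in B, Φ x y)
      ≤ ENNReal.ofReal (32 * ρ ^ 5) * v₁ * Dq := by
    rw [hT2]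
    calc (∫⁻ s in Ioo (0:ℝ) 1, ∫⁻ x in B, ∫⁻ y in B,
          (‖x - y‖₊ : ℝ≥0∞) ^ 2 * G (y + s • (x - y)))
        ≤ ∫⁻ _ in Ioo (0:ℝ) 1, ENNReal.ofReal (32 * ρ ^ 5) * v₁ * Dq := by
          refine setLIntegral_mono' measurableSet_Ioo fun s hs => ?_
          have := stepJ G hGm hρ0 hs
          rwa [hGint] at this
      _ = ENNReal.ofReal (32 * ρ ^ 5) * v₁ * Dq := by
          rw [setLIntegral_const]
          simp [Real.volume_Ioo]
  have hBvol : volume B = ENNReal.ofReal (ρ ^ 3) * v₁ := by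
    rw [hB, Measure.addHaar_ball_of_pos volume 0 hρ0, finrank_euclideanSpace_fin]
  have hL3 : L ≤ ENNReal.ofReal (32 * ρ ^ 2) * Dq := by
    have hsplit : ENNReal.ofReal (32 * ρ ^ 5)
        = ENNReal.ofReal (ρ ^ 3) * ENNReal.ofReal (32 * ρ ^ 2) := by
      rw [← ENNReal.ofReal_mul (by positivity)]; ring_nf
    have ha0 : ENNReal.ofReal (ρ ^ 3) * v₁ ≠ 0 := by
      simp only [ne_eq, mul_eq_zero, not_or]
      exact ⟨by simp [ENNReal.ofReal_eq_zero]; positivity, hv10⟩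
    have hat : ENNReal.ofReal (ρ ^ 3) * v₁ ≠ ⊤ := ENNReal.mul_ne_top ENNReal.ofReal_ne_top hv1t
    calc L ≤ (volume B)⁻¹ * (ENNReal.ofReal (32 * ρ ^ 5) * v₁ * Dq) :=
          hL1.trans (mul_le_mul_right hT3 _)
      _ = (ENNReal.ofReal (ρ ^ 3) * v₁)⁻¹ *
            ((ENNReal.ofReal (ρ ^ 3) * v₁) * (ENNReal.ofReal (32 * ρ ^ 2) * Dq)) := by
          rw [hBvol, hsplit]; ring_nf
      _ = ENNReal.ofReal (32 * ρ ^ 2) * Dq := by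
          rw [← mul_assoc, ENNReal.inv_mul_cancel ha0 hat, one_mul]
  -- back to the real-valued statement
  have hRHS : (∫ x in B, ‖fderiv ℝ u x‖ ^ 2) = Dq.toReal := by
    rw [integral_eq_lintegral_of_nonneg_ae (ae_of_all _ fun x => by positivity)
      hgiB.aestronglyMeasurable]
    congr 1
    apply lintegral_congr; intro z
    rw [← enorm_eq_nnnorm, ← ofReal_norm, ← ENNReal.ofReal_pow (norm_nonneg _)]
  have hmeas2 : AEStronglyMeasurable (fun x => ‖u x - c‖ ^ 2) (volume.restrict B) := by
    have h0 : AEStronglyMeasurable (fun x => u x - c) (volume.restrict B) :=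
      hiB.aestronglyMeasurable.sub aestronglyMeasurable_const
    exact (continuous_pow 2).comp_aestronglyMeasurable h0.norm
  have hLHS : (∫ x in B, ‖u x - c‖ ^ 2) = L.toReal := by
    rw [integral_eq_lintegral_of_nonneg_ae (ae_of_all _ fun x => by positivity) hmeas2]
    congr 1
    apply lintegral_congr; intro x
    rw [← enorm_eq_nnnorm, ← ofReal_norm, ← ENNReal.ofReal_pow (norm_nonneg _)]
  rw [hLHS, hRHS]
  have hfin : ENNReal.ofReal (32 * ρ ^ 2) * Dq ≠ ⊤ :=
    ENNReal.mul_ne_top ENNReal.ofReal_ne_top hDqtop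
  calc L.toReal ≤ (ENNReal.ofReal (32 * ρ ^ 2) * Dq).toReal := ENNReal.toReal_mono hfin hL3
    _ = 32 * ρ ^ 2 * Dq.toReal := by
        rw [ENNReal.toReal_mul, ENNReal.toReal_ofReal (by positivity)]

/-- Inequality (2.21): scaled mean-oscillation recursion. There are universal `c₀` and
`θ₀ ∈ (0,1/2]` such that `H̃(f;θr) ≤ c₀θ² H̃(f;r) + c₀[θ² + (1+θ)²/θ³] E(f;r)` for all
`θ ∈ (0,θ₀]`, `r ∈ (0,1/2)`. -/
theorem stmt_10 :
    ∃ c₀ : ℝ, 0 < c₀ ∧ ∃ θ₀ ∈ Ioc (0:ℝ) (1/2), ∀ f : ℝ → E3 → E3,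
      (∀ t ∈ Ioo (-(1/4:ℝ)) (0:ℝ), ∀ x ∈ ball (0:E3) (1/2), DifferentiableAt ℝ (f t) x) →
      (∀ t ∈ Ioo (-(1/4:ℝ)) (0:ℝ), IntegrableOn (f t) (ball (0:E3) (1/2))) →
      (∀ t ∈ Ioo (-(1/4:ℝ)) (0:ℝ), IntegrableOn (fun x => ‖f t x‖^2) (ball (0:E3) (1/2))) →
      (∀ t ∈ Ioo (-(1/4:ℝ)) (0:ℝ),
        IntegrableOn (fun x => ‖fderiv ℝ (f t) x‖^2) (ball (0:E3) (1/2))) →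
      (∀ s ∈ Ioc (0:ℝ) (1/2), IntegrableOn
        (fun t => ∫ x in ball (0:E3) s, ‖f t x - ⨍ y in ball (0:E3) s, f t y‖^2)
        (Ioo (-(s^2)) (0:ℝ))) →
      (∀ s ∈ Ioc (0:ℝ) (1/2), IntegrableOn
        (fun t => ∫ x in ball (0:E3) s, ‖fderiv ℝ (f t) x‖^2) (Ioo (-(s^2)) (0:ℝ))) →
      ∀ θ ∈ Ioc (0:ℝ) θ₀, ∀ r ∈ Ioo (0:ℝ) (1/2),
        Htilde f (θ*r) ≤ c₀ * θ^2 * Htilde f r + c₀ * (θ^2 + (1+θ)^2/θ^3) * Escaled f r := by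
  refine ⟨32, by norm_num, 1/2, ⟨by norm_num, le_refl _⟩, ?_⟩
  intro f h1 h2 h3 h4 h5 h6 θ hθ r hr
  obtain ⟨hθ0, hθh⟩ := hθ
  obtain ⟨hr0, hrh⟩ := hr
  have hρ0 : 0 < θ * r := mul_pos hθ0 hr0
  have hρh : θ * r < 1/2 := by nlinarith
  have hρr : θ * r < r := by nlinarith
  have hsub1 : Ioo (-((θ*r)^2)) (0:ℝ) ⊆ Ioo (-(1/4:ℝ)) 0 :=
    fun t ht => ⟨by nlinarith [ht.1], ht.2⟩
  have hsub2 : Ioo (-((θ*r)^2)) (0:ℝ) ⊆ Ioo (-(r^2)) 0 :=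
    fun t ht => ⟨by nlinarith [ht.1], ht.2⟩
  -- nonnegativity
  have hHnn : 0 ≤ Htilde f r := by
    apply mul_nonneg (by positivity)
    apply setIntegral_nonneg measurableSet_Ioo
    intro t _
    exact setIntegral_nonneg measurableSet_ball fun x _ => by positivity
  have hEnn0 : ∀ t, 0 ≤ ∫ x in ball (0:E3) r, ‖fderiv ℝ (f t) x‖^2 :=
    fun t => setIntegral_nonneg measurableSet_ball fun x _ => by positivity
  have hEnn : 0 ≤ Escaled f r := by
    apply mul_nonneg (by positivity)
    exact setIntegral_nonneg measurableSet_Ioo fun t _ => hEnn0 t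
  -- per-time Poincaré, enlarged to ball r
  have key : ∀ t ∈ Ioo (-((θ*r)^2)) (0:ℝ),
      (∫ x in ball (0:E3) (θ*r), ‖f t x - ⨍ y in ball (0:E3) (θ*r), f t y‖^2)
        ≤ 32*(θ*r)^2 * ∫ x in ball (0:E3) r, ‖fderiv ℝ (f t) x‖^2 := by
    intro t ht
    have ht4 := hsub1 ht
    refine (poincare_ball (f t) hρ0 hρh (h1 t ht4) (h2 t ht4) (h4 t ht4)).trans ?_
    have hmono : (∫ x in ball (0:E3) (θ*r), ‖fderiv ℝ (f t) x‖^2)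
        ≤ ∫ x in ball (0:E3) r, ‖fderiv ℝ (f t) x‖^2 := by
      apply setIntegral_mono_set ((h4 t ht4).mono_set (ball_subset_ball hrh.le))
        (ae_of_all _ fun x => by positivity)
        ((ball_subset_ball hρr.le).eventuallyLE)
    exact mul_le_mul_of_nonneg_left hmono (by positivity)
  -- integrate in time
  have hIosc : IntegrableOn
      (fun t => ∫ x in ball (0:E3) (θ*r), ‖f t x - ⨍ y in ball (0:E3) (θ*r), f t y‖^2)
      (Ioo (-((θ*r)^2)) (0:ℝ)) := h5 (θ*r) ⟨hρ0, hρh.le⟩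
  have hIE : IntegrableOn (fun t => ∫ x in ball (0:E3) r, ‖fderiv ℝ (f t) x‖^2)
      (Ioo (-(r^2)) (0:ℝ)) := h6 r ⟨hr0, hrh.le⟩
  have hstep1 : (∫ t in Ioo (-((θ*r)^2)) (0:ℝ),
        ∫ x in ball (0:E3) (θ*r), ‖f t x - ⨍ y in ball (0:E3) (θ*r), f t y‖^2)
      ≤ ∫ t in Ioo (-((θ*r)^2)) (0:ℝ),
        32*(θ*r)^2 * ∫ x in ball (0:E3) r, ‖fderiv ℝ (f t) x‖^2 := by
    refine setIntegral_mono_on hIosc ?_ measurableSet_Ioo key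
    exact (hIE.mono_set hsub2).const_mul _
  have hstep2 : (∫ t in Ioo (-((θ*r)^2)) (0:ℝ),
        32*(θ*r)^2 * ∫ x in ball (0:E3) r, ‖fderiv ℝ (f t) x‖^2)
      = 32*(θ*r)^2 * ∫ t in Ioo (-((θ*r)^2)) (0:ℝ),
          ∫ x in ball (0:E3) r, ‖fderiv ℝ (f t) x‖^2 := integral_const_mul _ _
  have hstep3 : (∫ t in Ioo (-((θ*r)^2)) (0:ℝ), ∫ x in ball (0:E3) r, ‖fderiv ℝ (f t) x‖^2)
      ≤ ∫ t in Ioo (-(r^2)) (0:ℝ), ∫ x in ball (0:E3) r, ‖fderiv ℝ (f t) x‖^2 := by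
    apply setIntegral_mono_set hIE (ae_of_all _ fun t => hEnn0 t) hsub2.eventuallyLE
  -- assemble
  have hHt : Htilde f (θ*r) ≤ 32/θ * Escaled f r := by
    rw [Htilde, Escaled]
    calc (1/(θ*r)^3) * ∫ t in Ioo (-((θ*r)^2)) (0:ℝ),
          ∫ x in ball (0:E3) (θ*r), ‖f t x - ⨍ y in ball (0:E3) (θ*r), f t y‖^2
        ≤ (1/(θ*r)^3) * (32*(θ*r)^2 *
            ∫ t in Ioo (-(r^2)) (0:ℝ), ∫ x in ball (0:E3) r, ‖fderiv ℝ (f t) x‖^2) := by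
          apply mul_le_mul_of_nonneg_left _ (by positivity)
          calc _ ≤ _ := hstep1
            _ = _ := hstep2
            _ ≤ 32*(θ*r)^2 * ∫ t in Ioo (-(r^2)) (0:ℝ),
                ∫ x in ball (0:E3) r, ‖fderiv ℝ (f t) x‖^2 :=
              mul_le_mul_of_nonneg_left hstep3 (by positivity)
      _ = 32/θ * ((1/r) * ∫ t in Ioo (-(r^2)) (0:ℝ),
            ∫ x in ball (0:E3) r, ‖fderiv ℝ (f t) x‖^2) := by
          field_simp
  have h32 : 32/θ ≤ 32*(θ^2 + (1+θ)^2/θ^3) := by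
    have hd1 : 1/θ ≤ (1+θ)^2/θ^3 := by
      rw [div_le_div_iff₀ hθ0 (by positivity)]
      nlinarith [sq_nonneg θ, hθ0.le]
    calc 32/θ = 32*(1/θ) := by ring
      _ ≤ 32*((1+θ)^2/θ^3) := by linarith
      _ ≤ 32*(θ^2 + (1+θ)^2/θ^3) := by nlinarith [sq_nonneg θ]
  calc Htilde f (θ*r) ≤ 32/θ * Escaled f r := hHt
    _ ≤ 32*(θ^2 + (1+θ)^2/θ^3) * Escaled f r := mul_le_mul_of_nonneg_right h32 hEnn
    _ ≤ 32 * θ^2 * Htilde f r + 32 * (θ^2 + (1+θ)^2/θ^3) * Escaled f r := by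
        nlinarith [mul_nonneg (mul_nonneg (by norm_num : (0:ℝ) ≤ 32) (sq_nonneg θ)) hHnn]
end
end
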